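/- Consider the sampled quasi-linear optimization problem P(ω) for a finite subset ω ⊆ Δ, and let (λ*, x*) = Opt(ω). If λ* = 0, then there exists a subset β ⊆ ω with at most d − 1 elements such that Cost(β) = Cost(ω); in particular, every essential set of P(ω) has cardinality at most d − 1 in this case. -/

import Mathlib

open scoped RealInnerProductSpace

/-- Feasible points of the sampled quasi-linear problem `P(S)`:
`λ ≥ 0`, `x ∈ X`, and `⟪a δ, x⟫ ≤ λ ⟪b δ, x⟫` for all `δ ∈ S`. -/
def QLFeasible {d : ℕ} {Δ : Type*} (X : Set (EuclideanSpace ℝ (Fin d)))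
    (a b : Δ → EuclideanSpace ℝ (Fin d)) (S : Set Δ)
    (lam : ℝ) (x : EuclideanSpace ℝ (Fin d)) : Prop :=
  0 ≤ lam ∧ x ∈ X ∧ ∀ δ ∈ S, ⟪a δ, x⟫ ≤ lam * ⟪b δ, x⟫

/-- The set of attainable values `(λ, c(x))`, ordered lexicographically,
of the sampled quasi-linear problem `P(S)`. `Cost(S)` is the least element
of this set. -/
def QLValues {d : ℕ} {Δ : Type*} (X : Set (EuclideanSpace ℝ (Fin d)))
    (a b : Δ → EuclideanSpace ℝ (Fin d)) (c : EuclideanSpace ℝ (Fin d) → ℝ)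
    (S : Set Δ) : Set (ℝ ×ₗ ℝ) :=
  {p | ∃ lam x, QLFeasible X a b S lam x ∧ p = toLex (lam, c x)}

/-- If the optimal solution `(λ*, x*)` of `P(ω)` has `λ* = 0`, then there is a
subset `β ⊆ ω` with at most `d - 1` elements achieving the same optimal value;
in particular every essential set of `P(ω)` has cardinality at most `d - 1`. -/
theorem essential_set_card_le_of_lambda_eq_zero {d : ℕ} (hd : 1 ≤ d) {Δ : Type*}
    (X : Set (EuclideanSpace ℝ (Fin d)))
    (hXcompact : IsCompact X) (hXconvex : Convex ℝ X)
    (hXint : (interior X).Nonempty) (hX0 : (0 : EuclideanSpace ℝ (Fin d)) ∉ X)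
    (a b : Δ → EuclideanSpace ℝ (Fin d))
    (hb : ∀ δ : Δ, ∀ x ∈ X, 0 < ⟪b δ, x⟫)
    (c : EuclideanSpace ℝ (Fin d) → ℝ) (m : ℝ) (hm : 0 < m)
    (hc : StrongConvexOn Set.univ m c)
    (ω : Finset Δ) (lamstar : ℝ) (xstar : EuclideanSpace ℝ (Fin d))
    (hfeas : QLFeasible X a b (ω : Set Δ) lamstar xstar)
    (hopt : IsLeast (QLValues X a b c (ω : Set Δ)) (toLex (lamstar, c xstar)))
    (hlam : lamstar = 0) :
    ∃ β : Finset Δ, β ⊆ ω ∧ β.card ≤ d - 1 ∧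
      IsLeast (QLValues X a b c (β : Set Δ)) (toLex (lamstar, c xstar)) := by
  classical
  subst hlam
  obtain ⟨-, hxX, hconω⟩ := hfeas
  have hx0 : xstar ≠ 0 := fun h => hX0 (h ▸ hxX)
  have hcon : ∀ δ ∈ ω, ⟪a δ, xstar⟫ ≤ 0 := by
    intro δ hδ
    simpa using hconω δ hδ
  have ccvx : ConvexOn ℝ Set.univ c := (hc.strictConvexOn hm).convexOn
  set A : Finset Δ := ω.filter (fun δ => ⟪a δ, xstar⟫ = 0) with hA
  have hAsub : A ⊆ ω := Finset.filter_subset _ _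
  have hAzero : ∀ δ ∈ A, ⟪a δ, xstar⟫ = 0 := fun δ hδ => (Finset.mem_filter.mp hδ).2
  -- Key: xstar minimizes c over X intersected with the active halfspaces.
  have key : ∀ y ∈ X, (∀ δ ∈ A, ⟪a δ, y⟫ ≤ 0) → c xstar ≤ c y := by
    intro y hyX hyA
    by_contra hlt
    push_neg at hlt
    -- find t ∈ (0,1] such that all constraints hold at xstar + t(y - xstar)
    have hexists : ∃ t : ℝ, 0 < t ∧ t ≤ 1 ∧
        ∀ δ ∈ ω, ⟪a δ, xstar⟫ + t * ⟪a δ, y - xstar⟫ ≤ 0 := by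
      set T : Finset Δ := ω.filter (fun δ => ¬ ⟪a δ, xstar⟫ = 0) with hT
      rcases T.eq_empty_or_nonempty with hTe | hTne
      · refine ⟨1, one_pos, le_refl 1, fun δ hδ => ?_⟩
        have hδA : δ ∈ A := by
          by_contra hδA
          have : δ ∈ T := by
            rw [hT, Finset.mem_filter]
            exact ⟨hδ, fun h => hδA (by rw [hA, Finset.mem_filter]; exact ⟨hδ, h⟩)⟩
          simp [hTe] at this
        have h1 := hAzero δ hδA
        have h2 := hyA δ hδA
        rw [inner_sub_right, h1]
        linarith
      · set η : ℝ := T.inf' hTne (fun δ => -⟪a δ, xstar⟫) with hη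
        set M : ℝ := max (T.sup' hTne (fun δ => ⟪a δ, y - xstar⟫)) 0 with hM
        have hM0 : 0 ≤ M := le_max_right _ _
        have hη0 : 0 < η := by
          rw [hη, Finset.lt_inf'_iff]
          intro δ hδ
          have h1 := hcon δ (Finset.mem_of_mem_filter δ hδ)
          have h2 : ¬ ⟪a δ, xstar⟫ = 0 := (Finset.mem_filter.mp hδ).2
          have : ⟪a δ, xstar⟫ < 0 := lt_of_le_of_ne h1 h2
          linarith
        refine ⟨min 1 (η / (M + 1)), lt_min one_pos (div_pos hη0 (by linarith)),
          min_le_left _ _, fun δ hδ => ?_⟩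
        set t : ℝ := min 1 (η / (M + 1)) with ht
        have ht0 : 0 < t := lt_min one_pos (div_pos hη0 (by linarith))
        by_cases hδA : ⟪a δ, xstar⟫ = 0
        · have hδA' : δ ∈ A := by rw [hA, Finset.mem_filter]; exact ⟨hδ, hδA⟩
          have h2 := hyA δ hδA'
          rw [inner_sub_right, hδA]
          have : t * (⟪a δ, y⟫ - 0) ≤ 0 := mul_nonpos_of_nonneg_of_nonpos ht0.le (by linarith)
          linarith
        · have hδT : δ ∈ T := by rw [hT, Finset.mem_filter]; exact ⟨hδ, hδA⟩
          have h1 : η ≤ -⟪a δ, xstar⟫ := Finset.inf'_le _ hδT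
          have h2 : ⟪a δ, y - xstar⟫ ≤ M :=
            le_trans (Finset.le_sup' (fun δ => ⟪a δ, y - xstar⟫) hδT) (le_max_left _ _)
          have h3 : t * ⟪a δ, y - xstar⟫ ≤ t * M := by
            rcases le_or_gt (⟪a δ, y - xstar⟫) M with h | h
            · exact mul_le_mul_of_nonneg_left h ht0.le
            · linarith
          have h4 : t ≤ η / (M + 1) := min_le_right _ _
          have h5 : t * M ≤ (η / (M + 1)) * M := mul_le_mul_of_nonneg_right h4 hM0
          have h6 : (η / (M + 1)) * M ≤ η := by
            rw [div_mul_eq_mul_div, div_le_iff₀ (by linarith)]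
            nlinarith
          linarith
    obtain ⟨t, ht0, ht1, htcon⟩ := hexists
    set z : EuclideanSpace ℝ (Fin d) := (1 - t) • xstar + t • y with hz
    have hzX : z ∈ X := hXconvex hxX hyX (by linarith) ht0.le (by ring)
    have hzc : c z < c xstar := by
      have h1 := ccvx.2 (Set.mem_univ xstar) (Set.mem_univ y)
        (by linarith : (0:ℝ) ≤ 1 - t) ht0.le (by ring)
      have h2 : (1 - t) * c xstar + t * c y < c xstar := by nlinarith
      exact lt_of_le_of_lt h1 h2
    have hzcon : ∀ δ ∈ (ω : Set Δ), ⟪a δ, z⟫ ≤ (0:ℝ) * ⟪b δ, z⟫ := by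
      intro δ hδ
      have h1 := htcon δ hδ
      have h2 : ⟪a δ, z⟫ = ⟪a δ, xstar⟫ + t * ⟪a δ, y - xstar⟫ := by
        rw [hz, inner_add_right, real_inner_smul_right, real_inner_smul_right,
          inner_sub_right]
        ring
      rw [h2]
      linarith
    have hmem : toLex ((0:ℝ), c z) ∈ QLValues X a b c (ω : Set Δ) :=
      ⟨0, z, ⟨le_refl 0, hzX, hzcon⟩, rfl⟩
    have hle := hopt.2 hmem
    rw [Prod.Lex.le_iff] at hle
    rcases hle with h | ⟨-, h⟩
    · exact absurd h (lt_irrefl 0)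
    · exact absurd h (not_le.mpr hzc)
  -- Setup for Helly's theorem in the orthogonal complement of xstar.
  set K : Submodule ℝ (EuclideanSpace ℝ (Fin d)) := (ℝ ∙ xstar)ᗮ with hK
  have hrank : Module.finrank ℝ K = d - 1 := by
    have h1 : Module.finrank ℝ (ℝ ∙ xstar) = 1 := finrank_span_singleton hx0
    have h2 : 1 + Module.finrank ℝ K = d := by
      have h3 := Submodule.finrank_add_finrank_orthogonal (K := (ℝ ∙ xstar))
      rw [h1, finrank_euclideanSpace_fin] at h3
      exact h3
    omega
  set P := K.orthogonalProjectionOnto with hP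
  have hproj : ∀ δ ∈ A, ∀ y : EuclideanSpace ℝ (Fin d),
      ⟪a δ, ((P y : K) : EuclideanSpace ℝ (Fin d))⟫ = ⟪a δ, y⟫ := by
    intro δ hδ y
    have hy : y - (P y : K) ∈ Kᗮ := Submodule.sub_starProjection_mem_orthogonal (K := K) y
    have he : Kᗮ = ℝ ∙ xstar := by
      rw [hK]
      exact Submodule.orthogonal_orthogonal (ℝ ∙ xstar)
    rw [he] at hy
    obtain ⟨r, hr⟩ := Submodule.mem_span_singleton.mp hy
    have h1 : ⟪a δ, y - ((P y : K) : EuclideanSpace ℝ (Fin d))⟫ = 0 := by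
      rw [← hr, real_inner_smul_right, hAzero δ hδ, mul_zero]
    rw [inner_sub_right] at h1
    linarith
  set S : Set (EuclideanSpace ℝ (Fin d)) := X ∩ {y | c y < c xstar} with hSdef
  have hSconv : Convex ℝ S := by
    apply hXconvex.inter
    have := ccvx.convex_lt (c xstar)
    simpa using this
  set S' : Set K := (fun y => P y) '' S with hS'def
  have hS'conv : Convex ℝ S' :=
    hSconv.is_linear_image ⟨fun v w => map_add P v w, fun r v => map_smul P r v⟩
  set F : Option Δ → Set K := fun o =>
    Option.elim o S' (fun δ => {v : K | ⟪a δ, (v : EuclideanSpace ℝ (Fin d))⟫ ≤ 0})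
    with hF
  set s : Finset (Option Δ) := insert none (A.image some) with hs
  have hFconv : ∀ i ∈ s, Convex ℝ (F i) := by
    rintro (_ | δ) _
    · exact hS'conv
    · exact convex_halfSpace_le
        ⟨fun v w => by rw [Submodule.coe_add, inner_add_right],
         fun r v => by rw [Submodule.coe_smul, real_inner_smul_right, smul_eq_mul]⟩ 0
  have hempty : ¬ (⋂ i ∈ s, F i).Nonempty := by
    rintro ⟨v, hv⟩
    simp only [Set.mem_iInter] at hv
    have hvS' : v ∈ S' := hv none (Finset.mem_insert_self _ _)
    obtain ⟨y, hyS, hvy⟩ := hvS'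
    have hyA : ∀ δ ∈ A, ⟪a δ, y⟫ ≤ 0 := by
      intro δ hδ
      have h1 : v ∈ F (some δ) := hv (some δ) (by
        rw [hs, Finset.mem_insert]
        exact Or.inr (Finset.mem_image_of_mem some hδ))
      have h2 : ⟪a δ, (v : EuclideanSpace ℝ (Fin d))⟫ ≤ 0 := h1
      rwa [← hvy, hproj δ hδ y] at h2
    exact absurd (key y hyS.1 hyA) (not_le.mpr hyS.2)
  have hH : ¬ ∀ I ⊆ s, I.card ≤ Module.finrank ℝ K + 1 → (⋂ i ∈ I, F i).Nonempty :=
    fun h => hempty (Convex.helly_theorem' hFconv h)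
  push_neg at hH
  obtain ⟨I, hIs, hIcard, hIempty⟩ := hH
  have hnoneI : none ∈ I := by
    by_contra hnone
    have h0 : (0 : K) ∈ ⋂ i ∈ I, F i := by
      simp only [Set.mem_iInter]
      rintro (_ | δ) hi
      · exact absurd hi hnone
      · show ⟪a δ, ((0 : K) : EuclideanSpace ℝ (Fin d))⟫ ≤ 0
        simp
    rw [hIempty] at h0
    exact h0
  refine ⟨A.filter (fun δ => some δ ∈ I), ?_, ?_, ?_, ?_⟩
  · exact (Finset.filter_subset _ _).trans hAsub
  · -- cardinality bound
    set β : Finset Δ := A.filter (fun δ => some δ ∈ I) with hβ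
    have h1 : β.image some ⊆ I.erase none := by
      intro i hi
      obtain ⟨δ, hδ, rfl⟩ := Finset.mem_image.mp hi
      exact Finset.mem_erase.mpr ⟨Option.some_ne_none δ, (Finset.mem_filter.mp hδ).2⟩
    have h2 : β.card = (β.image some).card :=
      (Finset.card_image_of_injective _ (Option.some_injective _)).symm
    have h3 : (β.image some).card ≤ (I.erase none).card := Finset.card_le_card h1
    have h4 : (I.erase none).card = I.card - 1 := Finset.card_erase_of_mem hnoneI
    have h5 : 1 ≤ I.card := Finset.card_pos.mpr ⟨none, hnoneI⟩
    rw [hrank] at hIcard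
    omega
  · -- membership
    refine ⟨0, xstar, ⟨le_refl 0, hxX, fun δ hδ => ?_⟩, rfl⟩
    have hδA : δ ∈ A := Finset.mem_of_mem_filter δ (Finset.mem_coe.mp hδ)
    rw [hAzero δ hδA]
    simp
  · -- lower bound
    rintro p ⟨lam, x, ⟨hlam', hxX', hcons'⟩, rfl⟩
    rw [Prod.Lex.le_iff]
    rcases hlam'.lt_or_eq with hl | hl
    · exact Or.inl hl
    · refine Or.inr ⟨hl, ?_⟩
      by_contra hcx
      push_neg at hcx
      have hmem : P x ∈ ⋂ i ∈ I, F i := by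
        simp only [Set.mem_iInter]
        rintro (_ | δ) hi
        · exact ⟨x, ⟨hxX', hcx⟩, rfl⟩
        · have hδA : δ ∈ A := by
            have := hIs hi
            rw [hs, Finset.mem_insert] at this
            rcases this with h | h
            · exact absurd h (Option.some_ne_none δ)
            · obtain ⟨δ', hδ', hδe⟩ := Finset.mem_image.mp h
              rwa [← Option.some_injective _ hδe]
          have hδβ : δ ∈ A.filter (fun δ => some δ ∈ I) :=
            Finset.mem_filter.mpr ⟨hδA, hi⟩
          have h1 : ⟪a δ, x⟫ ≤ 0 := by
            have := hcons' δ (Finset.mem_coe.mpr hδβ)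
            rwa [← hl, zero_mul] at this
          show ⟪a δ, ((P x : K) : EuclideanSpace ℝ (Fin d))⟫ ≤ 0
          rwa [hproj δ hδA x]
      rw [hIempty] at hmem
      exact hmem
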